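/- For all n ≥ 3 and m ≥ 1, the simple centralizer of x_{n−1} in SB_{n+m} has cardinality c_{n+m}(x_{n−1}) = 2 · F_{2n−5} · F_{2m−1}. -/

import Mathlib

/-- The defining relations of the positive braid monoid `MB_∞` on generators
`x i`, `i : ℕ+`: the braid relations and the far-commutation relations. -/
def BraidRel : FreeMonoid ℕ+ → FreeMonoid ℕ+ → Prop := fun a b =>
  (∃ i : ℕ+, a = FreeMonoid.of (i + 1) * FreeMonoid.of i * FreeMonoid.of (i + 1) ∧
      b = FreeMonoid.of i * FreeMonoid.of (i + 1) * FreeMonoid.of i) ∨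
  (∃ i j : ℕ+, i + 2 ≤ j ∧ a = FreeMonoid.of i * FreeMonoid.of j ∧
      b = FreeMonoid.of j * FreeMonoid.of i)

/-- The congruence generated by the braid relations. -/
def braidCon : Con (FreeMonoid ℕ+) := conGen BraidRel

/-- The positive braid monoid `MB_∞`. -/
abbrev MB : Type := braidCon.Quotient

/-- The generator `x_i` of `MB_∞`, for `i : ℕ+`. -/
def braidGen (i : ℕ+) : MB := braidCon.mk' (FreeMonoid.of i)

/-- The generator `x_i` of `MB_∞`, indexed by a natural number `i ≥ 1`
(junk value `x_1` for `i = 0`). -/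
def X (i : ℕ) : MB := braidGen ⟨max i 1, lt_of_lt_of_le one_pos (le_max_right i 1)⟩

/-- `x_i` divides `β`: `β = δ * x_i * ε` for some `δ ε ∈ MB_∞`. -/
def GenDvd (i : ℕ) (β : MB) : Prop := ∃ δ ε : MB, β = δ * X i * ε

/-- `x_i` left-divides `β`: `β = x_i * ε` for some `ε ∈ MB_∞`. -/
def GenDvdL (i : ℕ) (β : MB) : Prop := ∃ ε : MB, β = X i * ε

/-- `x_i` right-divides `β`: `β = δ * x_i` for some `δ ∈ MB_∞`. -/
def GenDvdR (i : ℕ) (β : MB) : Prop := ∃ δ : MB, β = δ * X i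

/-- The set `SB_n` of simple braids in `MB_n`: products of words in the
generators `x_1, …, x_{n-1}` in which each generator appears at most once. -/
def SB (n : ℕ) : Set MB :=
  {β | ∃ w : List ℕ, w.Nodup ∧ (∀ i ∈ w, 1 ≤ i ∧ i < n) ∧ β = (w.map X).prod}

/-- The simple centralizer `C_n(β)` of `β` in `SB_n`. -/
def C (n : ℕ) (β : MB) : Set MB := {γ ∈ SB n | β * γ = γ * β}

/-- `c_n(β)`, the cardinality of the simple centralizer `C_n(β)`. -/
noncomputable def c (n : ℕ) (β : MB) : ℕ := (C n β).ncard


open Equiv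


open Equiv

/-- product of adjacent swaps along a list of integers -/
def pperm (l : List ℤ) : Equiv.Perm ℤ := (l.map (fun i => Equiv.swap i (i+1))).prod

@[simp] lemma pperm_nil : pperm [] = 1 := rfl

lemma pperm_append (l₁ l₂ : List ℤ) : pperm (l₁ ++ l₂) = pperm l₁ * pperm l₂ := by
  simp [pperm]

lemma pperm_singleton (a : ℤ) : pperm [a] = Equiv.swap a (a+1) := by
  simp [pperm]

lemma swap_adj_apply (a t : ℤ) :
    Equiv.swap a (a+1) t = if t = a then a+1 else if t = a+1 then a else t := by
  rw [Equiv.swap_apply_def]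

lemma nodup_snoc {l : List ℤ} {a : ℤ} (h : (l ++ [a]).Nodup) : l.Nodup ∧ a ∉ l := by
  rw [List.nodup_append] at h
  exact ⟨h.1, fun hm => h.2.2 a hm a (List.mem_singleton_self a) rfl⟩

/-- Upward trajectory lemma. -/
lemma pperm_up (l : List ℤ) (hl : l.Nodup) (t : ℤ) (h : (t-1) ∉ l) :
    (t ∉ l → pperm l t = t) ∧ (t ∈ l → t+1 ≤ pperm l t) := by
  induction l using List.reverseRecOn generalizing t with
  | nil => simp
  | append_singleton l a ih =>
    rw [pperm_append, pperm_singleton]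
    obtain ⟨hl1, hal⟩ := nodup_snoc hl
    simp only [List.mem_append, List.mem_singleton] at h
    rw [not_or] at h
    constructor
    · intro hn
      simp only [List.mem_append, List.mem_singleton, not_or] at hn
      have hs : Equiv.swap a (a+1) t = t := by
        rw [swap_adj_apply, if_neg hn.2, if_neg (by omega)]
      rw [Equiv.Perm.mul_apply, hs]
      exact (ih hl1 t h.1).1 hn.1
    · intro hmem
      rw [Equiv.Perm.mul_apply]
      simp only [List.mem_append, List.mem_singleton] at hmem
      rcases hmem with hmem | rfl
      · have hta : t ≠ a := fun e => (e ▸ hal) hmem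
        have hs : Equiv.swap a (a+1) t = t := by
          rw [swap_adj_apply, if_neg hta, if_neg (by omega)]
        rw [hs]
        exact (ih hl1 t h.1).2 hmem
      · have hs : Equiv.swap t (t+1) t = t + 1 := Equiv.swap_apply_left t (t+1)
        rw [hs]
        have ht1 : (t+1)-1 ∉ l := by simpa using hal
        rcases (ih hl1 (t+1) ht1) with ⟨e1, e2⟩
        by_cases hc : (t+1) ∈ l
        · have := e2 hc; omega
        · have := e1 hc; omega

/-- Downward trajectory lemma. -/
lemma pperm_down (l : List ℤ) (hl : l.Nodup) (t : ℤ) (h : t ∉ l) :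
    ((t-1) ∉ l → pperm l t = t) ∧ ((t-1) ∈ l → pperm l t ≤ t-1) := by
  induction l using List.reverseRecOn generalizing t with
  | nil => simp
  | append_singleton l a ih =>
    rw [pperm_append, pperm_singleton]
    obtain ⟨hl1, hal⟩ := nodup_snoc hl
    simp only [List.mem_append, List.mem_singleton] at h
    rw [not_or] at h
    constructor
    · intro hn
      simp only [List.mem_append, List.mem_singleton, not_or] at hn
      have hs : Equiv.swap a (a+1) t = t := by
        rw [swap_adj_apply, if_neg h.2, if_neg (by omega)]
      rw [Equiv.Perm.mul_apply, hs]
      exact (ih hl1 t h.1).1 hn.1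
    · intro hmem
      rw [Equiv.Perm.mul_apply]
      simp only [List.mem_append, List.mem_singleton] at hmem
      rcases hmem with hmem | he
      · have hs : Equiv.swap a (a+1) t = t := by
          rw [swap_adj_apply, if_neg h.2,
            if_neg (by intro e; apply hal; rw [show a = t-1 by omega]; exact hmem)]
        rw [hs]
        exact (ih hl1 t h.1).2 hmem
      · subst he
        have hs : Equiv.swap (t-1) (t-1+1) t = t - 1 := by
          rw [show t-1+1 = t by ring]; exact Equiv.swap_apply_right _ t
        rw [hs]
        rcases ih hl1 (t-1) hal with ⟨e1, e2⟩
        by_cases hc : (t-1-1) ∈ l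
        · have := e2 hc; omega
        · have := e1 hc; omega

/-- Barrier: if no letter `k` occurs, points `≤ k` stay `≤ k`. -/
lemma pperm_barrier (l : List ℤ) (k : ℤ) (hk : k ∉ l) (t : ℤ) (ht : t ≤ k) :
    pperm l t ≤ k := by
  induction l using List.reverseRecOn generalizing t with
  | nil => simpa
  | append_singleton l a ih =>
    rw [pperm_append, pperm_singleton, Equiv.Perm.mul_apply]
    simp only [List.mem_append, List.mem_singleton] at hk
    rw [not_or] at hk
    apply ih hk.1
    rw [swap_adj_apply]
    split_ifs with h1 h2 <;> omega


lemma nodup_middle {u v : List ℤ} {x : ℤ} (h : (u ++ x :: v).Nodup) :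
    u.Nodup ∧ v.Nodup ∧ x ∉ u ∧ x ∉ v ∧ ∀ y ∈ u, y ∉ v := by
  rw [show u ++ x :: v = u ++ [x] ++ v by simp] at h
  rw [List.nodup_append, List.nodup_append] at h
  obtain ⟨⟨hu, -, d1⟩, hv, d2⟩ := h
  refine ⟨hu, hv, ?_, ?_, ?_⟩
  · exact fun hm => d1 x hm x (List.mem_singleton_self x) rfl
  · exact fun hm => d2 x (by simp) x hm rfl
  · exact fun y hy hyv => d2 y (by simp [hy]) y hyv rfl

/-- F1: `i` occurs before `i+1` ⇒ point `i+1` escapes upward. -/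
lemma pperm_before (u v : List ℤ) (i : ℤ) (h : (u ++ (i+1) :: v).Nodup) (hi : i ∈ u) :
    i + 2 ≤ pperm (u ++ (i+1) :: v) (i+1) := by
  obtain ⟨hu, hv, h1u, h1v, huv⟩ := nodup_middle h
  rw [show u ++ (i+1) :: v = u ++ [i+1] ++ v by simp, pperm_append, pperm_append,
    pperm_singleton]
  simp only [Equiv.Perm.mul_apply]
  have hv0 : pperm v (i+1) = i+1 :=
    (pperm_down v hv (i+1) h1v).1 (by simpa using (huv i hi))
  rw [hv0, Equiv.swap_apply_left]
  have := (pperm_up u hu ((i+1)+1) (by simpa using h1u))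
  by_cases hc : ((i+1)+1) ∈ u
  · have := this.2 hc; omega
  · have := this.1 hc; omega

/-- F2: `i+1` occurs before `i` ⇒ point `i+1` goes down to `≤ i`. -/
lemma pperm_after (u v : List ℤ) (i : ℤ) (h : (u ++ i :: v).Nodup) (hi : (i+1) ∈ u) :
    pperm (u ++ i :: v) (i+1) ≤ i := by
  obtain ⟨hu, hv, h1u, h1v, huv⟩ := nodup_middle h
  rw [show u ++ i :: v = u ++ [i] ++ v by simp, pperm_append, pperm_append, pperm_singleton]
  simp only [Equiv.Perm.mul_apply]
  have hv0 : pperm v (i+1) = i+1 :=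
    (pperm_down v hv (i+1) (huv _ hi)).1 (by simpa using h1v)
  rw [hv0, Equiv.swap_apply_right]
  have := (pperm_down u hu i h1u)
  by_cases hc : (i-1) ∈ u
  · have := this.2 hc; omega
  · have := this.1 hc; omega


lemma pperm_split (u v : List ℤ) (x t : ℤ) :
    pperm (u ++ x :: v) t = pperm u (Equiv.swap x (x+1) (pperm v t)) := by
  rw [show u ++ x::v = u ++ [x] ++ v by simp, pperm_append, pperm_append, pperm_singleton]
  simp [Equiv.Perm.mul_apply]

/-- the key non-commutation criterion -/
lemma pperm_not_comm (l : List ℤ) (hl : l.Nodup) (k : ℤ)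
    (h : (k+1) ∈ l ∨ (k-1) ∈ l) :
    Equiv.swap k (k+1) * pperm l ≠ pperm l * Equiv.swap k (k+1) := by
  intro heq
  have h0 : Equiv.swap k (k+1) (pperm l k) = pperm l (k+1) := by
    have := congrArg (fun p : Perm ℤ => p k) heq
    simpa [Equiv.Perm.mul_apply, Equiv.swap_apply_left] using this
  have hcases : (pperm l k = k ∧ pperm l (k+1) = k+1) ∨
      (pperm l k = k+1 ∧ pperm l (k+1) = k) := by
    rcases eq_or_ne (pperm l k) k with e | hne
    · left; exact ⟨e, by rw [← h0, e, Equiv.swap_apply_left]⟩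
    · rcases eq_or_ne (pperm l k) (k+1) with e | hne2
      · right; exact ⟨e, by rw [← h0, e, Equiv.swap_apply_right]⟩
      · exfalso
        have hp : pperm l (k+1) = pperm l k := by
          rw [← h0, swap_adj_apply, if_neg hne, if_neg hne2]
        exact (by omega : (k:ℤ) + 1 ≠ k) ((pperm l).injective hp)
  have hbk : pperm l k = k ∨ pperm l k = k+1 := hcases.imp And.left And.left
  have hbk1 : pperm l (k+1) = k+1 ∨ pperm l (k+1) = k := hcases.imp And.right And.right
  clear h0 heq
  rcases h with h | h
  · -- k+1 occurs in l
    by_cases hkl : k ∈ l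
    · obtain ⟨u, v, rfl⟩ := List.append_of_mem h
      by_cases hku : k ∈ u
      · have := pperm_before u v k hl hku
        omega
      · -- k ∈ v
        have hkv : k ∈ v := by
          rcases List.mem_append.mp hkl with h' | h'
          · exact absurd h' hku
          · rcases List.mem_cons.mp h' with h'' | h''
            · exact absurd h'' (by omega)
            · exact h''
        obtain ⟨v1, v2, rfl⟩ := List.append_of_mem hkv
        have hre : u ++ (k+1) :: (v1 ++ k :: v2) = (u ++ (k+1) :: v1) ++ k :: v2 := by simp
        rw [hre] at hl hbk hbk1 hcases
        have hA := pperm_after (u ++ (k+1) :: v1) v2 k hl (by simp)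
        -- so pperm _ (k+1) ≤ k, hence case2
        have hπk : pperm ((u ++ (k+1) :: v1) ++ k :: v2) k = k + 1 := by
          rcases hcases with ⟨e1, e2⟩ | ⟨e1, e2⟩ <;> omega
        obtain ⟨hu', hv2, hku', hkv2, hdisj⟩ := nodup_middle hl
        rw [pperm_split] at hπk
        by_cases hc : (k-1) ∈ v2
        · have hd := (pperm_down v2 hv2 k hkv2).2 hc
          have hst : Equiv.swap k (k+1) (pperm v2 k) = pperm v2 k := by
            rw [swap_adj_apply, if_neg (by omega), if_neg (by omega)]
          rw [hst] at hπk
          have := pperm_barrier (u ++ (k+1) :: v1) k hku' (pperm v2 k) (by omega)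
          omega
        · have hd := (pperm_down v2 hv2 k hkv2).1 (by simpa using hc)
          rw [hd, Equiv.swap_apply_left] at hπk
          have := (pperm_up (u ++ (k+1) :: v1) hu' (k+1) (by simpa using hku')).2 (by simp)
          omega
    · -- k ∉ l, k+1 ∈ l : point k+1 escapes up
      have := (pperm_up l hl (k+1) (by simpa using hkl)).2 h
      omega
  · -- k-1 occurs in l
    by_cases hkl : k ∈ l
    · obtain ⟨u, v, rfl⟩ := List.append_of_mem hkl
      obtain ⟨hu, hv, hku, hkv, hdisj⟩ := nodup_middle hl
      by_cases hc : (k-1) ∈ v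
      · -- k before k-1 : re-split at k-1
        obtain ⟨v1, v2, rfl⟩ := List.append_of_mem hc
        have hre : u ++ k :: (v1 ++ (k-1) :: v2) = (u ++ k :: v1) ++ (k-1) :: v2 := by simp
        rw [hre] at hl hbk
        obtain ⟨hu', hv2, hku'', hkv2, hdisj'⟩ := nodup_middle hl
        have hπk : pperm ((u ++ k :: v1) ++ (k-1) :: v2) k
            = pperm (u ++ k :: v1) (Equiv.swap (k-1) (k-1+1) (pperm v2 k)) := by
          rw [pperm_split]
        have hd : pperm v2 k = k := by
          refine (pperm_down v2 hv2 k ?_).1 (by simpa using hkv2)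
          intro hm; exact (hdisj' k (by simp)) hm
        rw [hd, show (k:ℤ)-1+1 = k by ring, Equiv.swap_apply_right] at hπk
        have hdn := pperm_down (u ++ k :: v1) hu' (k-1) (by simpa using hku'')
        by_cases hc2 : (k-1-1) ∈ u ++ k :: v1
        · have := hdn.2 hc2; omega
        · have := hdn.1 hc2; omega
      · -- k-1 ∈ u : k-1 before k
        have hcu : (k-1) ∈ u := by
          rcases List.mem_append.mp h with h' | h'
          · exact h'
          · rcases List.mem_cons.mp h' with h'' | h''
            · exact absurd h'' (by omega)
            · exact absurd h'' hc
        have hπk : pperm (u ++ k :: v) k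
            = pperm u (Equiv.swap k (k+1) (pperm v k)) := by rw [pperm_split]
        have hd : pperm v k = k := by
          refine (pperm_down v hv k hkv).1 ?_
          intro hm; exact (hdisj (k-1) hcu) hm
        rw [hd, Equiv.swap_apply_left] at hπk
        by_cases hc2 : (k+1) ∈ u
        · have := (pperm_up u hu (k+1) (by simpa using hku)).2 hc2
          omega
        · have hπk1 : pperm (u ++ k :: v) k = k + 1 := by
            rw [hπk]; exact (pperm_up u hu (k+1) (by simpa using hku)).1 hc2
          have hπ1 : pperm (u ++ k :: v) (k+1) = k := by
            rcases hcases with ⟨e1, e2⟩ | ⟨e1, e2⟩ <;> omega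
          by_cases hc3 : (k+1) ∈ v
          · obtain ⟨v1, v2, rfl⟩ := List.append_of_mem hc3
            have hre : u ++ k :: (v1 ++ (k+1) :: v2) = (u ++ k :: v1) ++ (k+1) :: v2 := by
              simp
            rw [hre] at hl hπ1
            have := pperm_before (u ++ k :: v1) v2 k hl (by simp)
            omega
          · -- k+1 ∉ l
            have hπk1' : pperm (u ++ k :: v) (k+1)
                = pperm u (Equiv.swap k (k+1) (pperm v (k+1))) := by rw [pperm_split]
            have hd2 : pperm v (k+1) = k+1 :=
              (pperm_down v hv (k+1) hc3).1 (by simpa using hkv)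
            rw [hd2, Equiv.swap_apply_right] at hπk1'
            have := (pperm_down u hu k hku).2 hcu
            omega
    · -- k ∉ l, k-1 ∈ l : point k goes down
      have := (pperm_down l hl k hkl).2 h
      omega

/-- lift a function on generators to `MB`, given braid and commutation compatibility -/
def mbLift {M : Type*} [Monoid M] (f : ℕ+ → M)
    (hb : ∀ i : ℕ+, f (i+1) * f i * f (i+1) = f i * f (i+1) * f i)
    (hc : ∀ i j : ℕ+, i + 2 ≤ j → f i * f j = f j * f i) : MB →* M :=
  braidCon.lift (FreeMonoid.lift f) (by
    apply Con.conGen_le.mpr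
    rintro x y (⟨i, rfl, rfl⟩ | ⟨i, j, hij, rfl, rfl⟩) <;>
      simp only [Con.ker_rel, map_mul, FreeMonoid.lift_eval_of]
    · exact hb i
    · exact hc i j hij)

lemma mbLift_gen {M : Type*} [Monoid M] (f : ℕ+ → M) (hb) (hc) (i : ℕ+) :
    mbLift f hb hc (braidGen i) = f i := by
  simp [mbLift, braidGen, Con.lift_mk']
  exact (Con.lift_coe _ _).trans (FreeMonoid.lift_eval_of _ _)

lemma pnat_mk_eq (i : ℕ) (hi : 1 ≤ i) :
    (⟨max i 1, lt_of_lt_of_le one_pos (le_max_right i 1)⟩ : ℕ+) = ⟨i, hi⟩ := by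
  have : max i 1 = i := Nat.max_eq_left hi
  exact Subtype.ext this

lemma mbLift_X {M : Type*} [Monoid M] (f : ℕ+ → M) (hb) (hc) (i : ℕ) (hi : 1 ≤ i) :
    mbLift f hb hc (X i) = f ⟨i, hi⟩ := by
  rw [X, pnat_mk_eq i hi]
  exact mbLift_gen f hb hc ⟨i, hi⟩

/-- braid relation for adjacent transpositions -/
lemma swap_braid (a : ℤ) :
    swap (a+1) (a+1+1) * swap a (a+1) * swap (a+1) (a+1+1)
      = swap a (a+1) * swap (a+1) (a+1+1) * swap a (a+1) := by
  ext x
  simp only [Perm.mul_apply, Equiv.swap_apply_def]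
  split_ifs <;> omega

lemma swap_comm_far {a b : ℤ} (h : a + 2 ≤ b) :
    swap a (a+1) * swap b (b+1) = swap b (b+1) * swap a (a+1) := by
  ext x
  simp only [Perm.mul_apply, Equiv.swap_apply_def]
  split_ifs <;> omega

/-- the permutation invariant -/
def permHom : MB →* Equiv.Perm ℤ :=
  mbLift (fun i => swap ((i : ℕ) : ℤ) (((i : ℕ) : ℤ) + 1))
    (by
      intro i
      have h1 : (((i + 1 : ℕ+) : ℕ) : ℤ) = ((i : ℕ) : ℤ) + 1 := by push_cast; ring
      rw [h1]
      exact swap_braid _)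
    (by
      intro i j hij
      have h2 : ((i : ℕ) : ℤ) + 2 ≤ ((j : ℕ) : ℤ) := by
        have := (PNat.coe_le_coe _ _).mpr hij
        push_cast at this ⊢
        omega
      exact swap_comm_far h2)

lemma permHom_X (i : ℕ) (hi : 1 ≤ i) :
    permHom (X i) = swap (i : ℤ) ((i : ℤ) + 1) := by
  rw [permHom, mbLift_X _ _ _ i hi]
  rfl

/-- the support monoid : finite subsets of ℕ under union -/
def Supp := Finset ℕ
instance : DecidableEq Supp := inferInstanceAs (DecidableEq (Finset ℕ))
instance : Singleton ℕ Supp := inferInstanceAs (Singleton ℕ (Finset ℕ))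
instance : Union Supp := inferInstanceAs (Union (Finset ℕ))
instance : Monoid Supp where
  mul a b := a ∪ b
  one := (∅ : Finset ℕ)
  mul_assoc a b c := Finset.union_assoc a b c
  one_mul := Finset.empty_union
  mul_one := Finset.union_empty

lemma Supp.mul_def (a b : Supp) : a * b = a ∪ b := rfl

def toSupp : Supp ≃ Finset ℕ := Equiv.refl _

/-- the support invariant -/
def suppHom : MB →* Supp :=
  mbLift (fun i => ({(i : ℕ)} : Supp))
    (by
      intro i
      show ({((i+1 : ℕ+) : ℕ)} ∪ {(i:ℕ)} ∪ {((i+1:ℕ+) : ℕ)} : Finset ℕ) = _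
      show _ = ({(i:ℕ)} ∪ {((i+1 : ℕ+) : ℕ)} ∪ {(i:ℕ)} : Finset ℕ)
      ext a
      simp only [Finset.mem_union, Finset.mem_singleton]
      tauto)
    (by
      intro i j _
      show ({(i:ℕ)} ∪ {(j:ℕ)} : Finset ℕ) = ({(j:ℕ)} ∪ {(i:ℕ)} : Finset ℕ)
      ext a
      simp only [Finset.mem_union, Finset.mem_singleton]
      tauto)

lemma suppHom_X (i : ℕ) (hi : 1 ≤ i) : suppHom (X i) = ({i} : Finset ℕ) := by
  rw [suppHom, mbLift_X _ _ _ i hi]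
  rfl

/-- products of generators -/
def toMB (w : List ℕ) : MB := (w.map X).prod

lemma toMB_nil : toMB [] = 1 := rfl

lemma toMB_cons (x : ℕ) (w : List ℕ) : toMB (x :: w) = X x * toMB w := by
  simp [toMB]

lemma toMB_append (u v : List ℕ) : toMB (u ++ v) = toMB u * toMB v := by
  simp [toMB]

lemma permHom_toMB (w : List ℕ) (hw : ∀ x ∈ w, 1 ≤ x) :
    permHom (toMB w) = (List.map (fun i => Equiv.swap i (i+1)) (w.map (fun x : ℕ => (x : ℤ)))).prod := by
  induction w with
  | nil => simp [toMB]
  | cons a w ih =>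
    rw [toMB_cons, map_mul, permHom_X a (hw a (by simp)), ih (fun x hx => hw x (by simp [hx]))]
    simp

lemma suppHom_toMB (w : List ℕ) (hw : ∀ x ∈ w, 1 ≤ x) :
    suppHom (toMB w) = (w.toFinset : Finset ℕ) := by
  induction w with
  | nil => rfl
  | cons a w ih =>
    rw [toMB_cons, map_mul, suppHom_X a (hw a (by simp)), ih (fun x hx => hw x (by simp [hx]))]
    change ({a} : Finset ℕ) ∪ w.toFinset = _
    rw [List.toFinset_cons, Finset.insert_eq]

/-- commutation of far-apart generators -/
lemma braidGen_comm (a b : ℕ+) (h : a + 2 ≤ b) :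
    braidGen a * braidGen b = braidGen b * braidGen a := by
  show braidCon.mk' _ * braidCon.mk' _ = braidCon.mk' _ * braidCon.mk' _
  rw [← map_mul, ← map_mul]
  have hrel : braidCon (FreeMonoid.of a * FreeMonoid.of b) (FreeMonoid.of b * FreeMonoid.of a) :=
    ConGen.Rel.of _ _ (Or.inr ⟨a, b, h, rfl, rfl⟩)
  rw [Con.coe_mk']
  exact (braidCon.eq).2 hrel

lemma X_comm {i j : ℕ} (hi : 1 ≤ i) (hij : i + 2 ≤ j) : X i * X j = X j * X i := by
  rw [X, X, pnat_mk_eq i hi, pnat_mk_eq j (by omega)]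
  apply braidGen_comm
  exact (PNat.coe_le_coe (⟨i, hi⟩ + 2) ⟨j, by omega⟩).mp (by show i + 2 ≤ j; exact hij)

/-! ### Canonical words for commutation classes -/

lemma nodup_middle' {α : Type*} {u v : List α} {x : α} (h : (u ++ x :: v).Nodup) :
    u.Nodup ∧ v.Nodup ∧ x ∉ u ∧ x ∉ v ∧ ∀ y ∈ u, y ∉ v := by
  rw [show u ++ x :: v = u ++ [x] ++ v by simp] at h
  rw [List.nodup_append, List.nodup_append] at h
  obtain ⟨⟨hu, -, d1⟩, hv, d2⟩ := h
  refine ⟨hu, hv, ?_, ?_, ?_⟩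
  · exact fun hm => d1 x hm x (List.mem_singleton_self x) rfl
  · exact fun hm => d2 x (by simp) x hm rfl
  · exact fun y hy hyv => d2 y (by simp [hy]) y hyv rfl

lemma commute_X_toMB {x : ℕ} {w : List ℕ} (h : ∀ b ∈ w, Commute (X x) (X b)) :
    Commute (X x) (toMB w) := by
  apply Commute.list_prod_right
  intro y hy
  obtain ⟨b, hb, rfl⟩ := List.mem_map.mp hy
  exact h b hb

lemma toMB_move_back (u v : List ℕ) (x : ℕ) (h : ∀ b ∈ v, Commute (X x) (X b)) :
    toMB (u ++ x :: v) = toMB (u ++ v) * X x := by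
  rw [toMB_append, toMB_append, toMB_cons]
  rw [← mul_assoc, mul_assoc (toMB u), (commute_X_toMB h).eq, mul_assoc]

lemma toMB_move_front (u v : List ℕ) (x : ℕ) (h : ∀ b ∈ u, Commute (X x) (X b)) :
    toMB (u ++ x :: v) = X x * toMB (u ++ v) := by
  rw [toMB_append, toMB_append, toMB_cons]
  rw [← mul_assoc, ← (commute_X_toMB h).eq, mul_assoc]

/-- the canonical word associated to a support `T` and an orientation `O`. -/
def Wd (O : Finset ℕ) : ℕ → Finset ℕ → List ℕ
  | 0, _ => []
  | (p+1), T =>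
      if p+1 ∈ T then
        (if p ∈ O then Wd O p T ++ [p+1] else (p+1) :: Wd O p T)
      else Wd O p T

lemma Wd_mem (O : Finset ℕ) (p : ℕ) (T : Finset ℕ) (x : ℕ) :
    x ∈ Wd O p T ↔ x ∈ T ∧ 1 ≤ x ∧ x ≤ p := by
  induction p with
  | zero => simp [Wd]; omega
  | succ p ih =>
    rw [Wd]
    split_ifs with h1 h2
    · simp only [List.mem_append, List.mem_singleton, ih]
      constructor
      · rintro (⟨h, h', h''⟩ | rfl)
        · exact ⟨h, h', by omega⟩
        · exact ⟨h1, by omega, le_refl _⟩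
      · rintro ⟨h, h', h''⟩
        rcases Nat.lt_or_ge x (p+1) with hx | hx
        · exact Or.inl ⟨h, h', by omega⟩
        · exact Or.inr (by omega)
    · simp only [List.mem_cons, ih]
      constructor
      · rintro (rfl | ⟨h, h', h''⟩)
        · exact ⟨h1, by omega, le_refl _⟩
        · exact ⟨h, h', by omega⟩
      · rintro ⟨h, h', h''⟩
        rcases Nat.lt_or_ge x (p+1) with hx | hx
        · exact Or.inr ⟨h, h', by omega⟩
        · exact Or.inl (by omega)
    · rw [ih]
      constructor
      · rintro ⟨h, h', h''⟩; exact ⟨h, h', by omega⟩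
      · rintro ⟨h, h', h''⟩
        refine ⟨h, h', ?_⟩
        rcases Nat.lt_or_ge x (p+1) with hx | hx
        · omega
        · exact absurd (by omega : x = p+1) (fun e => h1 (e ▸ h))

lemma Wd_nodup (O : Finset ℕ) (p : ℕ) (T : Finset ℕ) : (Wd O p T).Nodup := by
  induction p with
  | zero => simp [Wd]
  | succ p ih =>
    rw [Wd]
    have hnm : (p+1) ∉ Wd O p T := fun hm => by
      have := (Wd_mem O p T (p+1)).mp hm; omega
    split_ifs with h1 h2
    · exact List.Nodup.append ih (List.nodup_singleton _)
        (fun a ha hb => by rw [List.mem_singleton] at hb; exact hnm (hb ▸ ha))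
    · exact List.Nodup.cons hnm ih
    · exact ih

lemma Wd_congr (O O' T T' : Finset ℕ) (p : ℕ)
    (hT : ∀ x ≤ p, (x ∈ T ↔ x ∈ T')) (hO : ∀ x < p, (x ∈ O ↔ x ∈ O')) :
    Wd O p T = Wd O' p T' := by
  induction p with
  | zero => rfl
  | succ p ih =>
    have hrec : Wd O p T = Wd O' p T' :=
      ih (fun x hx => hT x (by omega)) (fun x hx => hO x (by omega))
    rw [Wd, Wd, hrec]
    by_cases h1 : p+1 ∈ T
    · rw [if_pos h1, if_pos ((hT (p+1) (le_refl _)).mp h1)]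
      by_cases h2 : p ∈ O
      · rw [if_pos h2, if_pos ((hO p (by omega)).mp h2)]
      · rw [if_neg h2, if_neg (fun h => h2 ((hO p (by omega)).mpr h))]
    · rw [if_neg h1, if_neg (fun h => h1 ((hT (p+1) (le_refl _)).mpr h))]

lemma Wd_split_before (O : Finset ℕ) (p : ℕ) (T : Finset ℕ) (i : ℕ) (hi : 1 ≤ i)
    (hiT : i ∈ T) (h1T : i+1 ∈ T) (hp : i+1 ≤ p) (hO : i ∈ O) :
    ∃ u v, Wd O p T = u ++ (i+1) :: v ∧ i ∈ u := by
  induction p with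
  | zero => omega
  | succ p ih =>
    rcases Nat.lt_or_ge (i+1) (p+1) with hlt | hge
    · obtain ⟨u, v, heq, hu⟩ := ih (by omega)
      rw [Wd, heq]
      split_ifs with h1 h2
      · exact ⟨u, v ++ [p+1], by simp, hu⟩
      · exact ⟨(p+1) :: u, v, by simp, by simp [hu]⟩
      · exact ⟨u, v, rfl, hu⟩
    · have hip : i = p := by omega
      subst hip
      rw [Wd, if_pos h1T, if_pos hO]
      exact ⟨Wd O i T, [], rfl, (Wd_mem O i T i).mpr ⟨hiT, hi, le_refl _⟩⟩

lemma Wd_split_after (O : Finset ℕ) (p : ℕ) (T : Finset ℕ) (i : ℕ) (hi : 1 ≤ i)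
    (hiT : i ∈ T) (h1T : i+1 ∈ T) (hp : i+1 ≤ p) (hO : i ∉ O) :
    ∃ u v, Wd O p T = u ++ i :: v ∧ (i+1) ∈ u := by
  induction p with
  | zero => omega
  | succ p ih =>
    rcases Nat.lt_or_ge (i+1) (p+1) with hlt | hge
    · obtain ⟨u, v, heq, hu⟩ := ih (by omega)
      rw [Wd, heq]
      split_ifs with h1 h2
      · exact ⟨u, v ++ [p+1], by simp, hu⟩
      · exact ⟨(p+1) :: u, v, by simp, by simp [hu]⟩
      · exact ⟨u, v, rfl, hu⟩
    · have hip : i = p := by omega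
      subst hip
      rw [Wd, if_pos h1T, if_neg hO]
      have hmem : i ∈ Wd O i T := (Wd_mem O i T i).mpr ⟨hiT, hi, le_refl _⟩
      obtain ⟨u1, v1, heq⟩ := List.append_of_mem hmem
      exact ⟨(i+1) :: u1, v1, by rw [heq]; rfl, by simp⟩

/-- the edge set of a support -/
def ET (T : Finset ℕ) : Finset ℕ := T.filter (fun i => i + 1 ∈ T)

lemma mem_ET {T : Finset ℕ} {i : ℕ} : i ∈ ET T ↔ i ∈ T ∧ i + 1 ∈ T := by
  simp [ET]

lemma ET_mono {T T' : Finset ℕ} (h : T ⊆ T') : ET T ⊆ ET T' := fun i hi => by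
  rw [mem_ET] at hi ⊢; exact ⟨h hi.1, h hi.2⟩

/-- every nodup word is equivalent to a canonical word -/
lemma reconstruct : ∀ (p : ℕ) (w : List ℕ), w.Nodup → (∀ x ∈ w, 1 ≤ x ∧ x ≤ p) →
    ∃ O : Finset ℕ, O ⊆ ET w.toFinset ∧ toMB w = toMB (Wd O p w.toFinset) := by
  intro p
  induction p with
  | zero =>
    intro w _ hw
    have : w = [] := by
      cases w with
      | nil => rfl
      | cons a l => exact absurd (hw a (by simp)) (by omega)
    subst this
    exact ⟨∅, by simp, rfl⟩
  | succ p ih =>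
    intro w hnd hw
    by_cases hp : p+1 ∈ w
    · obtain ⟨u, v, rfl⟩ := List.append_of_mem hp
      obtain ⟨hu, hv, hpu, hpv, hdisj⟩ := nodup_middle' hnd
      have hw' : ∀ x ∈ u ++ v, 1 ≤ x ∧ x ≤ p := by
        intro x hx
        have hx' : x ∈ u ++ (p+1) :: v := by
          rcases List.mem_append.mp hx with h | h
          · exact List.mem_append.mpr (Or.inl h)
          · exact List.mem_append.mpr (Or.inr (List.mem_cons_of_mem _ h))
        have := hw x hx'
        have hne : x ≠ p+1 := by
          rintro rfl
          rcases List.mem_append.mp hx with h | h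
          · exact hpu h
          · exact hpv h
        omega
      have hnd' : (u ++ v).Nodup := by
        rw [List.nodup_append]
        exact ⟨hu, hv, fun y hy b hb e => hdisj y hy (e ▸ hb)⟩
      obtain ⟨O', hO', heq⟩ := ih (u ++ v) hnd' hw'
      set T' := (u ++ v).toFinset with hT'
      set T := (u ++ (p+1) :: v).toFinset with hT
      have hTT' : ∀ x ≤ p, (x ∈ T ↔ x ∈ T') := by
        intro x hx
        rw [hT, hT']
        simp only [List.toFinset_append, List.toFinset_cons, Finset.mem_union,
          Finset.mem_insert, List.mem_toFinset]
        constructor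
        · rintro (h | h | h)
          · exact Or.inl h
          · omega
          · exact Or.inr h
        · rintro (h | h)
          · exact Or.inl h
          · exact Or.inr (Or.inr h)
      have hpT : p + 1 ∈ T := by rw [hT]; simp
      have hp1T' : p + 1 ∉ T' := by
        rw [hT']
        simp only [List.toFinset_append, Finset.mem_union, List.mem_toFinset]
        rintro (h | h)
        · exact hpu h
        · exact hpv h
      by_cases hpu2 : p ∈ u
      · -- p occurs before p+1 : append branch, orientation bit set
        have hcomm : ∀ b ∈ v, Commute (X (p+1)) (X b) := by
          intro b hb
          have hb1 := (hw b (by simp [hb])).1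
          have hb2 := (hw' b (by simp [hb])).2
          have hbp : b ≠ p := fun e => (hdisj p hpu2) (e ▸ hb)
          have : b + 2 ≤ p + 1 := by omega
          exact (X_comm hb1 this).symm
        have hmv : toMB (u ++ (p+1) :: v) = toMB (u ++ v) * X (p+1) :=
          toMB_move_back u v (p+1) hcomm
        refine ⟨insert p O', ?_, ?_⟩
        · intro x hx
          rcases Finset.mem_insert.mp hx with rfl | hx'
          · rw [mem_ET]
            constructor
            · rw [hT]; simp [hpu2]
            · exact hpT
          · exact ET_mono (fun y hy => (hTT' y (by
              have := (Wd_mem O' p T' y)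
              have hyT' := hO' hx'
              rw [mem_ET] at hyT'
              -- y ∈ T' means y ∈ u ++ v, so y ≤ p
              have : y ∈ u ++ v := List.mem_toFinset.mp hy
              exact (hw' y this).2)).mpr hy) (hO' hx')
        · rw [hmv, heq, Wd, if_pos hpT, if_pos (Finset.mem_insert_self p O'), toMB_append]
          congr 1
          · exact congrArg toMB (Wd_congr O' (insert p O') T' T p
              (fun x hx => (hTT' x hx).symm)
              (fun x hx => by
                simp only [Finset.mem_insert]
                constructor
                · exact Or.inr
                · rintro (rfl | h)
                  · omega
                  · exact h))
      · -- p does not occur before p+1 : prepend branch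
        have hcomm : ∀ b ∈ u, Commute (X (p+1)) (X b) := by
          intro b hb
          have hb1 := (hw b (by simp [hb])).1
          have hb2 := (hw' b (by simp [hb])).2
          have hbp : b ≠ p := fun e => hpu2 (e ▸ hb)
          have : b + 2 ≤ p + 1 := by omega
          exact (X_comm hb1 this).symm
        have hmv : toMB (u ++ (p+1) :: v) = X (p+1) * toMB (u ++ v) :=
          toMB_move_front u v (p+1) hcomm
        have hpO' : p ∉ O' := by
          intro h
          have := hO' h
          rw [mem_ET] at this
          exact hp1T' this.2
        refine ⟨O', ?_, ?_⟩
        · intro x hx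
          refine ET_mono (fun y hy => (hTT' y ?_).mpr hy) (hO' hx)
          exact (hw' y (List.mem_toFinset.mp hy)).2
        · rw [hmv, heq, Wd, if_pos hpT, if_neg hpO']
          rw [toMB_cons]
          congr 1
          exact congrArg toMB (Wd_congr O' O' T' T p (fun x hx => (hTT' x hx).symm)
            (fun _ _ => Iff.rfl))
    · -- p+1 not in w
      have hw' : ∀ x ∈ w, 1 ≤ x ∧ x ≤ p := by
        intro x hx
        have := hw x hx
        have : x ≠ p+1 := fun e => hp (e ▸ hx)
        omega
      obtain ⟨O, hO, heq⟩ := ih w hnd hw'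
      refine ⟨O, hO, ?_⟩
      rw [heq, Wd, if_neg (fun h => hp (List.mem_toFinset.mp h))]


/-! ### Counting -/

/-- the number of simple braids with support contained in `A` -/
def Scount (A : Finset ℕ) : ℕ := ∑ T ∈ A.powerset, 2 ^ (ET T).card

/-- the data set parametrizing simple braids with support in `A` -/
def EData (A : Finset ℕ) : Finset ((_ : Finset ℕ) × Finset ℕ) :=
  A.powerset.sigma (fun T => (ET T).powerset)

lemma card_EData (A : Finset ℕ) : (EData A).card = Scount A := by
  rw [EData, Finset.card_sigma]
  simp [Scount, Finset.card_powerset]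

lemma mem_EData {A : Finset ℕ} {d : (_ : Finset ℕ) × Finset ℕ} :
    d ∈ EData A ↔ d.1 ⊆ A ∧ d.2 ⊆ ET d.1 := by
  simp [EData, Finset.mem_sigma]

lemma ET_union_of_gap {A B : Finset ℕ} (hgap : ∀ a ∈ A, ∀ b ∈ B, a + 2 ≤ b)
    {T1 T2 : Finset ℕ} (h1 : T1 ⊆ A) (h2 : T2 ⊆ B) :
    ET (T1 ∪ T2) = ET T1 ∪ ET T2 := by
  ext x
  simp only [mem_ET, Finset.mem_union]
  constructor
  · rintro ⟨hx | hx, hx1 | hx1⟩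
    · exact Or.inl ⟨hx, hx1⟩
    · exact absurd (hgap x (h1 hx) (x+1) (h2 hx1)) (by omega)
    · exact absurd (hgap (x+1) (h1 hx1) x (h2 hx)) (by omega)
    · exact Or.inr ⟨hx, hx1⟩
  · rintro (⟨hx, hx1⟩ | ⟨hx, hx1⟩)
    · exact ⟨Or.inl hx, Or.inl hx1⟩
    · exact ⟨Or.inr hx, Or.inr hx1⟩

lemma sum_powerset_union_gap {M : Type*} [AddCommMonoid M] {A B : Finset ℕ}
    (hdisj : Disjoint A B) (f : Finset ℕ → M) :
    ∑ T ∈ (A ∪ B).powerset, f T = ∑ P ∈ A.powerset ×ˢ B.powerset, f (P.1 ∪ P.2) := by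
  refine Finset.sum_nbij' (i := fun T => (T ∩ A, T ∩ B)) (j := fun P => P.1 ∪ P.2)
    ?_ ?_ ?_ ?_ ?_
  · intro T hT
    rw [Finset.mem_powerset] at hT
    rw [Finset.mem_product, Finset.mem_powerset, Finset.mem_powerset]
    exact ⟨Finset.inter_subset_right, Finset.inter_subset_right⟩
  · intro P hP
    rw [Finset.mem_product, Finset.mem_powerset, Finset.mem_powerset] at hP
    rw [Finset.mem_powerset]
    exact Finset.union_subset_union hP.1 hP.2
  · intro T hT
    rw [Finset.mem_powerset] at hT
    simp only
    rw [← Finset.inter_union_distrib_left]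
    exact Finset.inter_eq_left.mpr hT
  · intro P hP
    rw [Finset.mem_product, Finset.mem_powerset, Finset.mem_powerset] at hP
    have h1 : P.1 ∩ B = ∅ := by
      rw [← Finset.disjoint_iff_inter_eq_empty]
      exact Finset.disjoint_of_subset_left hP.1 hdisj
    have h2 : P.2 ∩ A = ∅ := by
      rw [← Finset.disjoint_iff_inter_eq_empty]
      exact Finset.disjoint_of_subset_left hP.2 hdisj.symm
    have e1 : (P.1 ∪ P.2) ∩ A = P.1 := by
      rw [Finset.union_inter_distrib_right, h2, Finset.union_empty]
      exact Finset.inter_eq_left.mpr hP.1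
    have e2 : (P.1 ∪ P.2) ∩ B = P.2 := by
      rw [Finset.union_inter_distrib_right, h1, Finset.empty_union]
      exact Finset.inter_eq_left.mpr hP.2
    rw [e1, e2]
  · intro T hT
    rw [Finset.mem_powerset] at hT
    simp only
    rw [← Finset.inter_union_distrib_left]
    rw [Finset.inter_eq_left.mpr hT]

lemma Scount_union {A B : Finset ℕ} (hgap : ∀ a ∈ A, ∀ b ∈ B, a + 2 ≤ b) :
    Scount (A ∪ B) = Scount A * Scount B := by
  have hdisj : Disjoint A B := by
    rw [Finset.disjoint_left]
    intro a ha hb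
    exact absurd (hgap a ha a hb) (by omega)
  rw [Scount, sum_powerset_union_gap hdisj, Scount, Scount, Finset.sum_mul_sum,
    ← Finset.sum_product']
  apply Finset.sum_congr rfl
  intro P hP
  rw [Finset.mem_product, Finset.mem_powerset, Finset.mem_powerset] at hP
  rw [ET_union_of_gap hgap hP.1 hP.2, Finset.card_union_of_disjoint, pow_add]
  rw [Finset.disjoint_left]
  intro a ha hb
  rw [mem_ET] at ha hb
  exact absurd (hgap a (hP.1 ha.1) a (hP.2 hb.1)) (by omega)

lemma card_ET_insert_top {a p : ℕ} (T : Finset ℕ) (hT : T ⊆ Finset.Ico a (a+p)) :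
    (ET (insert (a+p) T)).card = (ET T).card + (if a+p-1 ∈ T then 1 else 0) := by
  have hb : ∀ y ∈ T, a ≤ y ∧ y < a+p := fun y hy => Finset.mem_Ico.mp (hT hy)
  by_cases h : a+p-1 ∈ T
  · have hc1 : a + p - 1 + 1 = a + p := by
      have := hb _ h; omega
    have hset : ET (insert (a+p) T) = insert (a+p-1) (ET T) := by
      ext x
      simp only [mem_ET, Finset.mem_insert]
      constructor
      · rintro ⟨hx | hx, hx1 | hx1⟩
        · omega
        · exact absurd (hb _ hx1).2 (by omega)
        · left; omega
        · right; exact ⟨hx, hx1⟩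
      · rintro (rfl | hx)
        · exact ⟨Or.inr h, Or.inl hc1⟩
        · exact ⟨Or.inr hx.1, Or.inr hx.2⟩
    rw [hset, if_pos h, Finset.card_insert_of_notMem]
    intro hmem
    rw [mem_ET] at hmem
    have := hb _ hmem.2
    omega
  · have hset : ET (insert (a+p) T) = ET T := by
      ext x
      simp only [mem_ET, Finset.mem_insert]
      constructor
      · rintro ⟨hx | hx, hx1 | hx1⟩
        · omega
        · exact absurd (hb _ hx1).2 (by omega)
        · exact absurd hx (by intro hx'; apply h; convert hx' using 2; omega)
        · exact ⟨hx, hx1⟩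
      · rintro hx
        exact ⟨Or.inr hx.1, Or.inr hx.2⟩
    rw [hset, if_neg h, Nat.add_zero]

lemma Scount_Ico : ∀ (p a : ℕ), Scount (Finset.Ico a (a+p)) = Nat.fib (2*p+1) ∧
    (∑ T ∈ (Finset.Ico a (a+p)).powerset, (if a+p-1 ∈ T then 2^(ET T).card else 0))
      = Nat.fib (2*p) := by
  intro p
  induction p with
  | zero =>
    intro a
    constructor
    · simp [Scount, ET]
    · simp
  | succ p ih =>
    intro a
    obtain ⟨ihS, ihH⟩ := ih a
    have hins : Finset.Ico a (a+(p+1)) = insert (a+p) (Finset.Ico a (a+p)) := by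
      ext x; simp only [Finset.mem_Ico, Finset.mem_insert]; omega
    have hnm : a+p ∉ Finset.Ico a (a+p) := by simp
    have key : ∑ T ∈ (Finset.Ico a (a+p)).powerset, 2 ^ (ET (insert (a+p) T)).card
        = Nat.fib (2*p+1) + Nat.fib (2*p) := by
      have : ∀ T ∈ (Finset.Ico a (a+p)).powerset,
          2 ^ (ET (insert (a+p) T)).card
            = 2 ^ (ET T).card + (if a+p-1 ∈ T then 2^(ET T).card else 0) := by
        intro T hT
        rw [Finset.mem_powerset] at hT
        rw [card_ET_insert_top T hT]
        split_ifs with h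
        · rw [pow_succ]; ring
        · rw [Nat.add_zero, Nat.add_zero]
      rw [Finset.sum_congr rfl this, Finset.sum_add_distrib, ihH, ← Scount, ihS]
    constructor
    · rw [Scount, hins, Finset.sum_powerset_insert hnm, ← Scount, ihS, key]
      have h1 : 2*(p+1)+1 = (2*p+1)+2 := by ring
      have h2 : (2*p+1)+1 = 2*p+2 := by ring
      rw [h1, Nat.fib_add_two, show (2*p+1)+1 = (2*p)+2 from by ring, Nat.fib_add_two]
      ring
    · rw [show a+(p+1)-1 = a+p from by omega, hins, Finset.sum_powerset_insert hnm]
      have e0 : ∑ T ∈ (Finset.Ico a (a+p)).powerset,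
          (if a+p ∈ T then 2^(ET T).card else 0) = 0 := by
        apply Finset.sum_eq_zero
        intro T hT
        rw [Finset.mem_powerset] at hT
        rw [if_neg (fun hm => hnm (hT hm))]
      have e1 : ∑ T ∈ (Finset.Ico a (a+p)).powerset,
          (if a+p ∈ insert (a+p) T then 2^(ET (insert (a+p) T)).card else 0)
          = ∑ T ∈ (Finset.Ico a (a+p)).powerset, 2 ^ (ET (insert (a+p) T)).card := by
        apply Finset.sum_congr rfl
        intro T _
        rw [if_pos (Finset.mem_insert_self _ _)]
      rw [e0, e1, key, zero_add, show 2*(p+1) = (2*p)+2 from by ring, Nat.fib_add_two]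
      ring

/-! ### Final assembly -/

lemma castList_nodup {w : List ℕ} (h : w.Nodup) :
    (w.map (fun x : ℕ => (x : ℤ))).Nodup :=
  h.map (fun a b hab => by exact_mod_cast hab)

lemma permHom_toMB' (w : List ℕ) (hw : ∀ x ∈ w, 1 ≤ x) :
    permHom (toMB w) = pperm (w.map (fun x : ℕ => (x : ℤ))) :=
  permHom_toMB w hw

/-- the parametrization map -/
noncomputable def Psi (N : ℕ) (d : (_ : Finset ℕ) × Finset ℕ) : MB :=
  toMB (Wd d.2 (N-1) d.1)

lemma wd_toFinset {N : ℕ} {T O : Finset ℕ} (hT : ∀ x ∈ T, 1 ≤ x ∧ x ≤ N-1) :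
    (Wd O (N-1) T).toFinset = T := by
  ext x
  rw [List.mem_toFinset, Wd_mem]
  constructor
  · exact fun h => h.1
  · intro h
    exact ⟨h, (hT x h).1, (hT x h).2⟩

lemma centralizer_eq {N k : ℕ} (hk2 : 2 ≤ k) (hkN : k + 1 < N) (A : Finset ℕ)
    (hmemA : ∀ x, x ∈ A ↔ ((1 ≤ x ∧ x + 2 ≤ k) ∨ x = k ∨ (k+2 ≤ x ∧ x < N))) :
    C N (X k) = Psi N '' (EData A : Set _) := by
  have hboundsA : ∀ x ∈ A, 1 ≤ x ∧ x ≤ N - 1 := by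
    intro x hx
    rcases (hmemA x).mp hx with h | h | h <;> omega
  apply Set.eq_of_subset_of_subset
  · -- C ⊆ image
    rintro γ ⟨⟨w, hnd, hbounds, rfl⟩, hceq⟩
    have hγ : (w.map X).prod = toMB w := rfl
    rw [hγ] at hceq ⊢
    have hw1 : ∀ x ∈ w, 1 ≤ x := fun x hx => (hbounds x hx).1
    set l := w.map (fun x : ℕ => (x : ℤ)) with hl
    have hnl : l.Nodup := castList_nodup hnd
    have hp : Equiv.swap (k:ℤ) ((k:ℤ)+1) * pperm l
        = pperm l * Equiv.swap (k:ℤ) ((k:ℤ)+1) := by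
      have h0 := congrArg permHom hceq
      rw [map_mul, map_mul, permHom_X k (by omega), permHom_toMB' w hw1] at h0
      exact h0
    have hnot1 : k+1 ∉ w := by
      intro hmem
      refine pperm_not_comm l hnl (k:ℤ) (Or.inl ?_) hp
      rw [hl, List.mem_map]
      exact ⟨k+1, hmem, by push_cast; ring⟩
    have hnot2 : k-1 ∉ w := by
      intro hmem
      refine pperm_not_comm l hnl (k:ℤ) (Or.inr ?_) hp
      rw [hl, List.mem_map]
      exact ⟨k-1, hmem, by rw [Nat.cast_sub (by omega)]; push_cast; ring⟩
    have hwA : ∀ x ∈ w, x ∈ A := by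
      intro x hx
      have hb := hbounds x hx
      have h1 : x ≠ k+1 := fun e => hnot1 (e ▸ hx)
      have h2 : x ≠ k-1 := fun e => hnot2 (e ▸ hx)
      rw [hmemA]
      omega
    obtain ⟨O, hO, heq⟩ := reconstruct (N-1) w hnd
      (fun x hx => ⟨(hbounds x hx).1, by have := (hbounds x hx).2; omega⟩)
    refine ⟨⟨w.toFinset, O⟩, ?_, heq.symm⟩
    rw [Finset.mem_coe, mem_EData]
    exact ⟨fun x hx => hwA x (List.mem_toFinset.mp hx), hO⟩
  · -- image ⊆ C
    rintro γ ⟨d, hd, rfl⟩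
    rw [Finset.mem_coe, mem_EData] at hd
    obtain ⟨hdA, hdO⟩ := hd
    set w := Wd d.2 (N-1) d.1 with hwdef
    have hbounds : ∀ x ∈ w, 1 ≤ x ∧ x < N := by
      intro x hx
      rw [hwdef, Wd_mem] at hx
      have := hboundsA x (hdA hx.1)
      omega
    constructor
    · exact ⟨w, Wd_nodup _ _ _, hbounds, rfl⟩
    · show X k * toMB w = toMB w * X k
      refine (commute_X_toMB ?_).eq
      intro b hb
      have hbA : b ∈ A := by
        rw [hwdef, Wd_mem] at hb
        exact hdA hb.1
      rcases (hmemA b).mp hbA with h | rfl | h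
      · exact (X_comm h.1 h.2).symm
      · exact Commute.refl _
      · exact X_comm (by omega) h.1

lemma psi_injOn {N k : ℕ} (hk2 : 2 ≤ k) (hkN : k + 1 < N) (A : Finset ℕ)
    (hmemA : ∀ x, x ∈ A ↔ ((1 ≤ x ∧ x + 2 ≤ k) ∨ x = k ∨ (k+2 ≤ x ∧ x < N))) :
    Set.InjOn (Psi N) (EData A : Set _) := by
  have hboundsA : ∀ x ∈ A, 1 ≤ x ∧ x ≤ N - 1 := by
    intro x hx
    rcases (hmemA x).mp hx with h | h | h <;> omega
  intro d1 hd1 d2 hd2 heq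
  rw [Finset.mem_coe, mem_EData] at hd1 hd2
  obtain ⟨hA1, hO1⟩ := hd1
  obtain ⟨hA2, hO2⟩ := hd2
  have hb1 : ∀ x ∈ d1.1, 1 ≤ x ∧ x ≤ N-1 := fun x hx => hboundsA x (hA1 hx)
  have hb2 : ∀ x ∈ d2.1, 1 ≤ x ∧ x ≤ N-1 := fun x hx => hboundsA x (hA2 hx)
  have hw1 : ∀ x ∈ Wd d1.2 (N-1) d1.1, 1 ≤ x := by
    intro x hx; rw [Wd_mem] at hx; exact hx.2.1
  have hw2 : ∀ x ∈ Wd d2.2 (N-1) d2.1, 1 ≤ x := by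
    intro x hx; rw [Wd_mem] at hx; exact hx.2.1
  -- supports agree
  have hsupp := congrArg suppHom heq
  rw [Psi, Psi, suppHom_toMB _ hw1, suppHom_toMB _ hw2,
    wd_toFinset hb1, wd_toFinset hb2] at hsupp
  -- permutations agree
  have hperm := congrArg permHom heq
  rw [Psi, Psi, permHom_toMB' _ hw1, permHom_toMB' _ hw2] at hperm
  have hT : d1.1 = d2.1 := hsupp
  -- orientations agree
  have key : ∀ (O O' : Finset ℕ), O ⊆ ET d1.1 → O' ⊆ ET d1.1 →
      pperm ((Wd O (N-1) d1.1).map (fun x : ℕ => (x : ℤ)))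
        = pperm ((Wd O' (N-1) d1.1).map (fun x : ℕ => (x : ℤ))) → O ⊆ O' := by
    intro O O' hO hO' hpq i hiO
    by_contra hiO'
    have hiE := hO hiO
    rw [mem_ET] at hiE
    have hib : 1 ≤ i ∧ i ≤ N-1 := hboundsA i (hA1 hiE.1)
    have hib1 : i+1 ≤ N-1 := (hboundsA (i+1) (hA1 hiE.2)).2
    obtain ⟨u, v, hsplit, hmem⟩ :=
      Wd_split_before O (N-1) d1.1 i hib.1 hiE.1 hiE.2 hib1 hiO
    obtain ⟨u', v', hsplit', hmem'⟩ :=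
      Wd_split_after O' (N-1) d1.1 i hib.1 hiE.1 hiE.2 hib1 hiO'
    have hnd := Wd_nodup O (N-1) d1.1
    have hnd' := Wd_nodup O' (N-1) d1.1
    rw [hsplit] at hnd hpq
    rw [hsplit'] at hnd' hpq
    have hc1 : (u ++ (i+1) :: v).map (fun x : ℕ => (x : ℤ))
        = u.map (fun x : ℕ => (x : ℤ)) ++ ((i:ℤ)+1) :: v.map (fun x : ℕ => (x : ℤ)) := by
      simp
    have hc2 : (u' ++ i :: v').map (fun x : ℕ => (x : ℤ))
        = u'.map (fun x : ℕ => (x : ℤ)) ++ (i:ℤ) :: v'.map (fun x : ℕ => (x : ℤ)) := by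
      simp
    rw [hc1, hc2] at hpq
    have hle := pperm_before (u.map (fun x : ℕ => (x : ℤ))) (v.map (fun x : ℕ => (x : ℤ))) (i:ℤ)
      (by rw [← hc1]; exact castList_nodup hnd)
      (List.mem_map.mpr ⟨i, hmem, rfl⟩)
    have hge := pperm_after (u'.map (fun x : ℕ => (x : ℤ))) (v'.map (fun x : ℕ => (x : ℤ))) (i:ℤ)
      (by rw [← hc2]; exact castList_nodup hnd')
      (List.mem_map.mpr ⟨i+1, hmem', by push_cast; ring⟩)
    rw [hpq] at hle
    omega
  have hO : d1.2 = d2.2 := by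
    apply Finset.Subset.antisymm
    · exact key d1.2 d2.2 hO1 (hT ▸ hO2) (by rw [hT] at hperm ⊢; exact hperm)
    · exact key d2.2 d1.2 (hT ▸ hO2) hO1 (by rw [hT] at hperm ⊢; exact hperm.symm)
  exact Sigma.ext hT (heq_of_eq hO)

/-- Proposition 1.5 b): `c_{n+m}(x_{n-1}) = 2 · F_{2n-5} · F_{2m-1}` for all
`n ≥ 3` and `m ≥ 1`. -/
theorem card_centralizer_top_gen (n m : ℕ) (hn : 3 ≤ n) (hm : 1 ≤ m) :
    c (n + m) (X (n - 1)) = 2 * Nat.fib (2 * n - 5) * Nat.fib (2 * m - 1) := by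
  set k := n - 1 with hkdef
  set N := n + m with hNdef
  have hk2 : 2 ≤ k := by omega
  have hkN : k + 1 < N := by omega
  set P1 : Finset ℕ := Finset.Ico 1 (1 + (k-2)) with hP1
  set PK : Finset ℕ := Finset.Ico k (k+1) with hPK
  set P2 : Finset ℕ := Finset.Ico (k+2) ((k+2) + (m-1)) with hP2
  set A : Finset ℕ := P1 ∪ (PK ∪ P2) with hA
  have hmemA : ∀ x, x ∈ A ↔ ((1 ≤ x ∧ x + 2 ≤ k) ∨ x = k ∨ (k+2 ≤ x ∧ x < N)) := by
    intro x
    simp only [hA, hP1, hPK, hP2, Finset.mem_union, Finset.mem_Ico]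
    omega
  have hC := centralizer_eq hk2 hkN A hmemA
  show (C N (X k)).ncard = _
  rw [hC, Set.ncard_image_of_injOn (psi_injOn hk2 hkN A hmemA), Set.ncard_coe_finset,
    card_EData]
  have hg1 : ∀ a ∈ P1, ∀ b ∈ PK ∪ P2, a + 2 ≤ b := by
    intro a ha b hb
    rw [hP1, Finset.mem_Ico] at ha
    rcases Finset.mem_union.mp hb with hb | hb <;>
      rw [Finset.mem_Ico] at hb <;> omega
  have hg2 : ∀ a ∈ PK, ∀ b ∈ P2, a + 2 ≤ b := by
    intro a ha b hb
    rw [hPK, Finset.mem_Ico] at ha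
    rw [hP2, Finset.mem_Ico] at hb
    omega
  rw [hA, Scount_union hg1, Scount_union hg2, hP1, hPK, hP2,
    (Scount_Ico (k-2) 1).1, (Scount_Ico 1 k).1, (Scount_Ico (m-1) (k+2)).1]
  have e1 : 2*(k-2)+1 = 2*n-5 := by omega
  have e2 : 2*(m-1)+1 = 2*m-1 := by omega
  rw [e1, e2, show Nat.fib (2*1+1) = 2 from by decide]
  ring
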